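/- For any skew-Hermitian N×N matrix X that is off-diagonal with respect to the decomposition ℂ^N = ℂ^k ⊕ ℂ^{N−k} (i.e., X ∈ 𝔤(N,k), the orthocomplement of 𝔲(k)⊕𝔲(N−k) in 𝔲(N)), the sum Σ_{1≤i≤k, k+1≤j≤N} (‖[X, E_{ij}]‖_HS² + ‖[X, F_{ij}]‖_HS²) equals N‖X‖_HS², where E_{ij}, F_{ij} are the standard orthonormal basis of 𝔤(N,k). -/

import Mathlib

open Matrix

noncomputable def grassE (N : ℕ) (i j : Fin N) : Matrix (Fin N) (Fin N) ℂ :=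
  ((Real.sqrt 2 : ℂ)⁻¹) • (Matrix.single i j 1 - Matrix.single j i 1)

noncomputable def grassF (N : ℕ) (i j : Fin N) : Matrix (Fin N) (Fin N) ℂ :=
  (Complex.I * (Real.sqrt 2 : ℂ)⁻¹) • (Matrix.single i j 1 + Matrix.single j i 1)

/-- Squared Hilbert–Schmidt norm `‖A‖_HS² = Re Tr(A A*)`. -/
noncomputable def hsNormSq {N : ℕ} (A : Matrix (Fin N) (Fin N) ℂ) : ℝ :=
  ((A * Aᴴ).trace).re

/-- Commutator of matrices. -/
noncomputable def matComm {N : ℕ} (A B : Matrix (Fin N) (Fin N) ℂ) : Matrix (Fin N) (Fin N) ℂ :=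
  A * B - B * A

/-- for skew-Hermitian `X` with vanishing diagonal blocks relative to
`ℂ^N = ℂ^k ⊕ ℂ^{N−k}`, one has
`Σ_{i<k≤j} (‖[X,E_{ij}]‖² + ‖[X,F_{ij}]‖²) = N ‖X‖²` (Hilbert–Schmidt norms). -/
lemma hsNormSq_eq {N : ℕ} (A : Matrix (Fin N) (Fin N) ℂ) :
    hsNormSq A = ∑ a, ∑ b, Complex.normSq (A a b) := by
  simp [hsNormSq, Matrix.trace, Matrix.diag, Matrix.mul_apply, Matrix.conjTranspose_apply,
    Complex.mul_conj, Complex.re_sum]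

lemma mulStd {N : ℕ} (X : Matrix (Fin N) (Fin N) ℂ) (c : ℂ) (i j a b : Fin N) :
    (X * Matrix.single i j c) a b = if j = b then X a i * c else 0 := by
  by_cases h : j = b <;> simp [Matrix.mul_apply, Matrix.single, h, Finset.sum_ite_eq]

lemma stdMul {N : ℕ} (X : Matrix (Fin N) (Fin N) ℂ) (c : ℂ) (i j a b : Fin N) :
    (Matrix.single i j c * X) a b = if i = a then c * X j b else 0 := by
  by_cases h : i = a <;> simp [Matrix.mul_apply, Matrix.single, h, Finset.sum_ite_eq]

lemma entryE {N : ℕ} (X : Matrix (Fin N) (Fin N) ℂ) (i j a b : Fin N) :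
    (matComm X (grassE N i j)) a b = ((Real.sqrt 2 : ℂ)⁻¹) *
      (((if j = b then X a i else 0) - (if i = a then X j b else 0))
        - ((if i = b then X a j else 0) - (if j = a then X i b else 0))) := by
  by_cases h1 : j = b <;> by_cases h2 : i = a <;> by_cases h3 : i = b <;> by_cases h4 : j = a <;>
    simp [matComm, grassE, Matrix.mul_sub, Matrix.sub_mul,
      Matrix.sub_apply, mulStd, stdMul, h1, h2, h3, h4] <;> split_ifs <;> ring

lemma entryF {N : ℕ} (X : Matrix (Fin N) (Fin N) ℂ) (i j a b : Fin N) :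
    (matComm X (grassF N i j)) a b = (Complex.I * (Real.sqrt 2 : ℂ)⁻¹) *
      (((if j = b then X a i else 0) - (if i = a then X j b else 0))
        + ((if i = b then X a j else 0) - (if j = a then X i b else 0))) := by
  by_cases h1 : j = b <;> by_cases h2 : i = a <;> by_cases h3 : i = b <;> by_cases h4 : j = a <;>
    simp [matComm, grassF, Matrix.mul_add, Matrix.add_mul, Matrix.mul_sub, Matrix.sub_mul,
      Matrix.add_apply, Matrix.sub_apply, mulStd, stdMul, h1, h2, h3, h4] <;> split_ifs <;> ring

lemma parallelogram (z w : ℂ) :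
    Complex.normSq (z - w) + Complex.normSq (z + w) = 2 * (Complex.normSq z + Complex.normSq w) := by
  simp [Complex.normSq_apply]; ring

lemma normSq_sqrt2inv_mul (z : ℂ) :
    Complex.normSq (((Real.sqrt 2 : ℂ)⁻¹) * z) = (1/2) * Complex.normSq z := by
  rw [Complex.normSq_mul, Complex.normSq_inv, Complex.normSq_ofReal,
    Real.mul_self_sqrt (by norm_num)]
  norm_num

lemma normSq_I_sqrt2inv_mul (z : ℂ) :
    Complex.normSq ((Complex.I * (Real.sqrt 2 : ℂ)⁻¹) * z) = (1/2) * Complex.normSq z := by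
  rw [mul_assoc, Complex.normSq_mul, Complex.normSq_I, one_mul, normSq_sqrt2inv_mul]

lemma pairSum {N : ℕ} (X : Matrix (Fin N) (Fin N) ℂ) (i j : Fin N)
    (hij : i ≠ j) (hii : X i i = 0) (hjj : X j j = 0) :
    hsNormSq (matComm X (grassE N i j)) + hsNormSq (matComm X (grassF N i j))
      = ((∑ a, Complex.normSq (X a i)) + (∑ b, Complex.normSq (X j b)))
        + ((∑ a, Complex.normSq (X a j)) + (∑ b, Complex.normSq (X i b))) := by
  have key : ∀ a b : Fin N,
      Complex.normSq ((matComm X (grassE N i j)) a b)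
        + Complex.normSq ((matComm X (grassF N i j)) a b)
      = ((if j = b then Complex.normSq (X a i) else 0)
          + (if i = a then Complex.normSq (X j b) else 0))
        + ((if i = b then Complex.normSq (X a j) else 0)
          + (if j = a then Complex.normSq (X i b) else 0)) := by
    intro a b
    rw [entryE, entryF, normSq_sqrt2inv_mul, normSq_I_sqrt2inv_mul]
    have par := parallelogram
      ((if j = b then X a i else 0) - (if i = a then X j b else 0))
      ((if i = b then X a j else 0) - (if j = a then X i b else 0))
    have step : (1/2 : ℝ) * Complex.normSq
          (((if j = b then X a i else 0) - (if i = a then X j b else 0))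
            - ((if i = b then X a j else 0) - (if j = a then X i b else 0)))
        + (1/2 : ℝ) * Complex.normSq
          (((if j = b then X a i else 0) - (if i = a then X j b else 0))
            + ((if i = b then X a j else 0) - (if j = a then X i b else 0)))
        = Complex.normSq ((if j = b then X a i else 0) - (if i = a then X j b else 0))
          + Complex.normSq ((if i = b then X a j else 0) - (if j = a then X i b else 0)) := by
      linarith
    rw [step]
    by_cases h1 : j = b <;> by_cases h2 : i = a <;> by_cases h3 : i = b <;> by_cases h4 : j = a <;>
      simp_all [Complex.normSq_sub, Complex.normSq_neg]
  calc hsNormSq (matComm X (grassE N i j)) + hsNormSq (matComm X (grassF N i j))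
      = ∑ a, ∑ b, (Complex.normSq ((matComm X (grassE N i j)) a b)
          + Complex.normSq ((matComm X (grassF N i j)) a b)) := by
        rw [hsNormSq_eq, hsNormSq_eq]
        rw [← Finset.sum_add_distrib]
        exact Finset.sum_congr rfl fun a _ => (Finset.sum_add_distrib).symm
    _ = _ := by
        simp only [key, Finset.sum_add_distrib]
        simp [Finset.sum_ite_eq, Finset.sum_comm (f := fun a b => if i = a then Complex.normSq (X j b) else 0)]


lemma sum_ite_and {N k : ℕ} (f : Fin N → Fin N → ℝ) :
    (∑ i : Fin N, ∑ j : Fin N, if (i : ℕ) < k ∧ k ≤ (j : ℕ) then f i j else 0)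
      = ∑ i ∈ Finset.univ.filter (fun i : Fin N => (i : ℕ) < k),
          ∑ j ∈ Finset.univ.filter (fun j : Fin N => k ≤ (j : ℕ)), f i j := by
  rw [Finset.sum_filter]
  refine Finset.sum_congr rfl fun i _ => ?_
  rw [Finset.sum_filter]
  by_cases hi : (i : ℕ) < k
  · simp only [hi, if_true, true_and]
  · simp only [hi, if_false, false_and]
    simp

theorem stmt_3 (N k : ℕ) (hk : 1 ≤ k) (hkN : k ≤ N - 1)
    (X : Matrix (Fin N) (Fin N) ℂ)
    (hskew : Xᴴ = -X)
    (hblock : ∀ i j : Fin N,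
      (((i : ℕ) < k ∧ (j : ℕ) < k) ∨ (k ≤ (i : ℕ) ∧ k ≤ (j : ℕ))) → X i j = 0) :
    (∑ i : Fin N, ∑ j : Fin N,
        if (i : ℕ) < k ∧ k ≤ (j : ℕ) then
          hsNormSq (matComm X (grassE N i j)) + hsNormSq (matComm X (grassF N i j))
        else 0)
      = (N : ℝ) * hsNormSq X := by
  classical
  have hsym : ∀ a b : Fin N, Complex.normSq (X a b) = Complex.normSq (X b a) := by
    intro a b
    have h := congrFun (congrFun hskew a) b
    simp only [Matrix.conjTranspose_apply, Matrix.neg_apply, Complex.star_def] at h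
    rw [← Complex.normSq_conj (X b a), h, Complex.normSq_neg]
  let c : Fin N → ℝ := fun i => ∑ a, Complex.normSq (X a i)
  have hrow : ∀ i : Fin N, (∑ a, Complex.normSq (X i a)) = c i := by
    intro i; exact Finset.sum_congr rfl fun a _ => hsym i a
  let A : Finset (Fin N) := Finset.univ.filter (fun i : Fin N => (i : ℕ) < k)
  let B : Finset (Fin N) := Finset.univ.filter (fun j : Fin N => k ≤ (j : ℕ))
  have hBeq : B = Finset.univ.filter (fun j : Fin N => ¬ ((j : ℕ) < k)) := by
    apply Finset.filter_congr; intro x _; simp [not_lt]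
  have hmemA : ∀ i ∈ A, (i : ℕ) < k := by intro i hi; simpa [A] using hi
  have hmemB : ∀ j ∈ B, k ≤ (j : ℕ) := by intro j hj; simpa [B] using hj
  have step1 : (∑ i : Fin N, ∑ j : Fin N,
        if (i : ℕ) < k ∧ k ≤ (j : ℕ) then
          hsNormSq (matComm X (grassE N i j)) + hsNormSq (matComm X (grassF N i j))
        else 0)
      = ∑ i ∈ A, ∑ j ∈ B, (2 * c i + 2 * c j) := by
    rw [sum_ite_and]
    refine Finset.sum_congr rfl fun i hi => Finset.sum_congr rfl fun j hj => ?_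
    have hik : (i : ℕ) < k := hmemA i hi
    have hjk : k ≤ (j : ℕ) := hmemB j hj
    have hij : i ≠ j := fun h => by rw [h] at hik; omega
    have hii : X i i = 0 := hblock i i (Or.inl ⟨hik, hik⟩)
    have hjj : X j j = 0 := hblock j j (Or.inr ⟨hjk, hjk⟩)
    rw [pairSum X i j hij hii hjj, hrow j, hrow i]
    ring
  rw [step1]
  have hSA : ∀ i ∈ A, c i = ∑ a ∈ B, Complex.normSq (X a i) := by
    intro i hi
    show (∑ a, Complex.normSq (X a i)) = _
    rw [← Finset.sum_filter_add_sum_filter_not Finset.univ (fun a : Fin N => (a : ℕ) < k)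
      (fun a => Complex.normSq (X a i)), ← hBeq]
    have hz : ∑ a ∈ A, Complex.normSq (X a i) = 0 :=
      Finset.sum_eq_zero fun a ha => by
        rw [hblock a i (Or.inl ⟨hmemA a ha, hmemA i hi⟩), Complex.normSq_zero]
    rw [hz, zero_add]
  have hSB : ∀ j ∈ B, c j = ∑ a ∈ A, Complex.normSq (X a j) := by
    intro j hj
    show (∑ a, Complex.normSq (X a j)) = _
    rw [← Finset.sum_filter_add_sum_filter_not Finset.univ (fun a : Fin N => (a : ℕ) < k)
      (fun a => Complex.normSq (X a j)), ← hBeq]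
    have hz : ∑ a ∈ B, Complex.normSq (X a j) = 0 :=
      Finset.sum_eq_zero fun a ha => by
        rw [hblock a j (Or.inr ⟨hmemB a ha, hmemB j hj⟩), Complex.normSq_zero]
    rw [hz, add_zero]
  have hSAB : (∑ i ∈ A, c i) = ∑ j ∈ B, c j := by
    rw [Finset.sum_congr rfl hSA, Finset.sum_congr rfl hSB, Finset.sum_comm]
    exact Finset.sum_congr rfl fun a _ => Finset.sum_congr rfl fun i _ => hsym a i
  have hT : hsNormSq X = (∑ i ∈ A, c i) + ∑ j ∈ B, c j := by
    rw [hsNormSq_eq, Finset.sum_comm, hBeq]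
    exact (Finset.sum_filter_add_sum_filter_not Finset.univ
      (fun i : Fin N => (i : ℕ) < k) c).symm
  have hcard : A.card + B.card = N := by
    rw [hBeq]
    rw [Finset.card_filter_add_card_filter_not]
    simp
  have hcardR : ((A.card : ℝ) + (B.card : ℝ)) = (N : ℝ) := by exact_mod_cast hcard
  have expand : (∑ i ∈ A, ∑ j ∈ B, (2 * c i + 2 * c j))
      = (B.card : ℝ) * (2 * ∑ i ∈ A, c i) + (A.card : ℝ) * (2 * ∑ j ∈ B, c j) := by
    calc (∑ i ∈ A, ∑ j ∈ B, (2 * c i + 2 * c j))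
        = (∑ i ∈ A, ((∑ _j ∈ B, 2 * c i) + ∑ j ∈ B, 2 * c j)) :=
          Finset.sum_congr rfl fun i _ => Finset.sum_add_distrib
      _ = (∑ i ∈ A, ∑ _j ∈ B, 2 * c i) + ∑ _i ∈ A, ∑ j ∈ B, 2 * c j :=
          Finset.sum_add_distrib
      _ = _ := by
          simp [Finset.sum_const, nsmul_eq_mul, Finset.mul_sum]
  rw [expand, hT]
  rw [← hSAB]
  linear_combination (2 * ∑ i ∈ A, c i) * hcardR
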